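/- Let A be a commutative ring and f ∈ A((t)) a Laurent series of the form f = c(1 + g) where c ∈ A is invertible, g ∈ A((t)) with constant coefficient zero and with the negative part Σ_{l<0} a_l t^l nilpotent in A((t)). Then the set of supports of all integer powers f^k (k ∈ ℤ) is uniformly bounded below: there exists N ∈ ℤ such that for every k ∈ ℤ, the coefficient of t^l in f^k vanishes for all l < N. -/

import Mathlib

open HahnSeries

/-- The strictly negative part `Σ_{l<0} aₗ tˡ` of a Laurent series. -/
def negPart {A : Type*} [CommRing A] (g : LaurentSeries A) : LaurentSeries A where
  coeff := fun l => if l < 0 then g.coeff l else 0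
  isPWO_support' := by
    refine g.isPWO_support.mono fun l hl => ?_
    simp only [Function.mem_support] at hl ⊢
    intro h0
    apply hl
    simp [h0]

section Aux

variable {A : Type*} [CommRing A]

lemma coeff_mul_eq_zero {x y : LaurentSeries A} {n n' l : ℤ}
    (hx : ∀ i < n, x.coeff i = 0) (hy : ∀ j < n', y.coeff j = 0) (hl : l < n + n') :
    (x * y).coeff l = 0 := by
  rw [HahnSeries.coeff_mul]
  refine Finset.sum_eq_zero fun ij hij => ?_
  rw [Finset.mem_addAntidiagonal] at hij
  by_cases h1 : ij.1 < n
  · rw [hx _ h1, zero_mul]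
  · have h2 : ij.2 < n' := by
      have := hij.2.2
      omega
    rw [hy _ h2, mul_zero]

lemma coeff_finsetSum {α : Type*} (s : Finset α) (f : α → LaurentSeries A) (l : ℤ) :
    (∑ i ∈ s, f i).coeff l = ∑ i ∈ s, (f i).coeff l := by
  classical
  induction s using Finset.induction_on with
  | empty => simp
  | insert _ _ h ih => rw [Finset.sum_insert h, Finset.sum_insert h, HahnSeries.coeff_add, ih]

/-- The subring of Laurent series supported in nonnegative degrees. -/
def nonnegSubring (A : Type*) [CommRing A] : Subring (LaurentSeries A) where
  carrier := {h | ∀ l < 0, h.coeff l = 0}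
  zero_mem' := fun l _ => HahnSeries.coeff_zero
  one_mem' := fun l hl => by rw [HahnSeries.coeff_one, if_neg hl.ne]
  add_mem' := fun {a b} ha hb l hl => by rw [HahnSeries.coeff_add, ha l hl, hb l hl, add_zero]
  neg_mem' := fun {a} ha l hl => by rw [HahnSeries.coeff_neg, ha l hl, neg_zero]
  mul_mem' := fun {a b} ha hb l hl => coeff_mul_eq_zero ha hb (by omega)

end Aux

theorem powers_uniformly_bounded_below {A : Type*} [CommRing A]
    (c : A) (hc : IsUnit c) (g : LaurentSeries A)
    (hg0 : g.coeff 0 = 0) (hgnil : IsNilpotent (negPart g))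
    (f : LaurentSeries A) (hf : f = HahnSeries.C c * (1 + g)) (hu : IsUnit f) :
    ∃ N : ℤ, ∀ (k : ℤ) (l : ℤ), l < N →
      ((hu.unit ^ k : (LaurentSeries A)ˣ) : LaurentSeries A).coeff l = 0 := by
  classical
  set gneg := negPart g with hgneg_def
  set gpos : LaurentSeries A := g - gneg with hgpos_def
  set B := nonnegSubring A with hB_def
  -- basic coefficient facts
  have hgneg_coeff : ∀ l : ℤ, gneg.coeff l = if l < 0 then g.coeff l else 0 := fun l => rfl
  have hgpos0 : ∀ l ≤ 0, gpos.coeff l = 0 := by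
    intro l hl
    rw [hgpos_def, HahnSeries.coeff_sub, hgneg_coeff]
    rcases lt_or_eq_of_le hl with h | h
    · rw [if_pos h, sub_self]
    · rw [h, if_neg (lt_irrefl 0), sub_zero, hg0]
  have hgposB : gpos ∈ B := fun l hl => hgpos0 l hl.le
  have hCB : ∀ a : A, HahnSeries.C a ∈ B := by
    intro a l hl
    exact HahnSeries.coeff_single_of_ne hl.ne
  -- nilpotency exponent
  obtain ⟨m₀, hm₀⟩ := hgnil
  set m : ℕ := m₀ + 1 with hm_def
  have hm : gneg ^ m = 0 := by rw [hm_def, pow_succ, hm₀, zero_mul]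
  -- lower bound for support of gneg
  obtain ⟨o, ho0, ho⟩ : ∃ o : ℤ, o ≤ 0 ∧ ∀ l < o, gneg.coeff l = 0 :=
    ⟨min gneg.order 0, min_le_right _ _, fun l hl =>
      HahnSeries.coeff_eq_zero_of_lt_order (lt_of_lt_of_le hl (min_le_left _ _))⟩
  set N : ℤ := (m : ℤ) * o with hN_def
  have powlem : ∀ i : ℕ, ∀ l : ℤ, l < (i : ℤ) * o → (gneg ^ i).coeff l = 0 := by
    intro i
    induction i with
    | zero =>
      intro l hl
      simp only [Nat.cast_zero, zero_mul] at hl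
      rw [pow_zero, HahnSeries.coeff_one, if_neg hl.ne]
    | succ i ih =>
      intro l hl
      rw [pow_succ]
      refine coeff_mul_eq_zero ih ho ?_
      push_cast at hl
      linarith
  have powlemN : ∀ i : ℕ, ∀ l < N, (gneg ^ i).coeff l = 0 := by
    intro i l hl
    by_cases him : i ≤ m
    · refine powlem i l (lt_of_lt_of_le hl ?_)
      exact mul_le_mul_of_nonpos_right (by exact_mod_cast him) ho0
    · have hz : gneg ^ i = 0 := by
        obtain ⟨j, rfl⟩ := Nat.exists_eq_add_of_le (le_of_not_ge him)
        rw [_root_.pow_add, hm, zero_mul]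
      rw [hz, HahnSeries.coeff_zero]
  -- the key subalgebra
  set R : Subalgebra B (LaurentSeries A) := Algebra.adjoin B {gneg} with hR_def
  have memB : ∀ x : LaurentSeries A, x ∈ B → x ∈ R := by
    intro x hx
    exact Subalgebra.algebraMap_mem R ⟨x, hx⟩
  have hgnegR : gneg ∈ R := Algebra.subset_adjoin rfl
  have keylem : ∀ h : LaurentSeries A, h ∈ R → ∀ l < N, h.coeff l = 0 := by
    intro h hmem l hl
    rw [hR_def, Algebra.adjoin_singleton_eq_range_aeval] at hmem
    obtain ⟨p, hp⟩ := hmem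
    have hp' : (Polynomial.aeval gneg) p = h := hp
    rw [← hp', Polynomial.aeval_eq_sum_range, coeff_finsetSum]
    refine Finset.sum_eq_zero fun i _ => ?_
    rw [Algebra.smul_def]
    refine coeff_mul_eq_zero (n := 0) (n' := N) ?_ (powlemN i) (by omega)
    intro j hj
    exact (p.coeff i).2 j hj
  -- f belongs to R
  have hug : (1 : LaurentSeries A) + g = (1 + gpos) + gneg := by rw [hgpos_def]; ring
  have hfR : f ∈ R := by
    have hf2 : f = HahnSeries.C c * (1 + gpos) + HahnSeries.C c * gneg := by
      rw [hf, hug]; ring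
    rw [hf2]
    exact add_mem (memB _ (mul_mem (hCB c) (add_mem (one_mem B) hgposB)))
      (mul_mem (memB _ (hCB c)) hgnegR)
  -- inverse of u := 1 + gpos via power series
  set u : LaurentSeries A := 1 + gpos with hu_def
  have huB : u ∈ B := add_mem (one_mem B) hgposB
  set q : PowerSeries A := PowerSeries.mk fun n => u.coeff (n : ℤ) with hq_def
  have hnotin : ∀ l : ℤ, l < 0 → l ∉ Set.range ((↑) : ℕ → ℤ) := by
    rintro l hl ⟨n, rfl⟩
    omega
  have hq : HahnSeries.ofPowerSeries ℤ A q = u := by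
    ext l
    by_cases hl0 : 0 ≤ l
    · lift l to ℕ using hl0
      rw [HahnSeries.ofPowerSeries_apply_coeff, hq_def, PowerSeries.coeff_mk]
    · rw [HahnSeries.ofPowerSeries_apply, HahnSeries.embDomain_notin_range
        (hnotin l (lt_of_not_ge hl0)), huB l (lt_of_not_ge hl0)]
  obtain ⟨qu, hquq⟩ : IsUnit q := by
    rw [PowerSeries.isUnit_iff_constantCoeff]
    have : PowerSeries.constantCoeff q = 1 := by
      rw [hq_def, PowerSeries.constantCoeff_mk, Nat.cast_zero, hu_def, HahnSeries.coeff_add,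
        hgpos0 0 le_rfl, add_zero, HahnSeries.coeff_one, if_pos rfl]
    rw [this]
    exact isUnit_one
  set v : LaurentSeries A := HahnSeries.ofPowerSeries ℤ A ↑qu⁻¹ with hv_def
  have huv : u * v = 1 := by
    rw [hv_def, ← hq, ← map_mul]
    rw [show q * (↑qu⁻¹ : PowerSeries A) = 1 by rw [← hquq]; exact qu.mul_inv]
    exact map_one _
  have hvB : v ∈ B := by
    intro l hl
    rw [hv_def, HahnSeries.ofPowerSeries_apply,
      HahnSeries.embDomain_notin_range (hnotin l hl)]
  -- inverse of c
  obtain ⟨cu, hcu⟩ := hc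
  set c' : A := ↑cu⁻¹ with hc'_def
  have hcc' : c * c' = 1 := by rw [hc'_def, ← hcu]; exact cu.mul_inv
  -- the geometric sum
  set x : LaurentSeries A := v * gneg with hx_def
  have hxm : x ^ m = 0 := by rw [hx_def, mul_pow, hm, mul_zero]
  set S : LaurentSeries A := ∑ j ∈ Finset.range m, (-x) ^ j with hS_def
  have hS : (1 + x) * S = 1 := by
    have h2 : (-x) ^ m = 0 := by
      rw [show (-x : LaurentSeries A) = (-1) * x by ring, mul_pow, hxm, mul_zero]
    have h1 := geom_sum_mul (-x) m
    rw [h2] at h1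
    rw [hS_def]
    linear_combination -h1
  set w : LaurentSeries A := HahnSeries.C c' * v * S with hw_def
  have hfw : f * w = 1 := by
    have step : f * w = (HahnSeries.C c * HahnSeries.C c') * ((u * v + x) * S) := by
      rw [hf, hug, hw_def, hx_def]; ring
    rw [step, huv, hS, mul_one, ← map_mul, hcc', map_one]
  have hwR : w ∈ R := by
    rw [hw_def, hS_def]
    refine mul_mem (mul_mem (memB _ (hCB c')) (memB _ hvB)) (Subalgebra.sum_mem R fun j _ => ?_)
    exact pow_mem (neg_mem (mul_mem (memB _ hvB) hgnegR)) j
  have hinv : ((hu.unit⁻¹ : (LaurentSeries A)ˣ) : LaurentSeries A) = w :=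
    Units.inv_eq_of_mul_eq_one_right (by rw [IsUnit.unit_spec]; exact hfw)
  refine ⟨N, fun k l hl => keylem _ ?_ l hl⟩
  cases k with
  | ofNat n =>
    rw [Int.ofNat_eq_coe, zpow_natCast, Units.val_pow_eq_pow_val, IsUnit.unit_spec]
    exact pow_mem hfR n
  | negSucc n =>
    rw [zpow_negSucc, ← inv_pow, Units.val_pow_eq_pow_val, hinv]
    exact pow_mem hwR (n + 1)
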